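/- Let X be a set carrying two metrics ρ_1 and ρ_2 that are strongly equivalent (i.e., there exist constants c, C > 0 with c·ρ_1(x, y) ≤ ρ_2(x, y) ≤ C·ρ_1(x, y) for all x, y ∈ X), and suppose (X, ρ_1) is doubling. Let H be a hypothesis class on X. Then H satisfies the r-UUS property with respect to ρ_1 for some r > 0 if and only if it satisfies the r'-UUS property with respect to ρ_2 for some r' > 0. Moreover, for all ε, ε', δ, δ' > 0, H is (ε, ε')-uniformly generatable with respect to ρ_1 if and only if it is (δ, δ')-uniformly generatable with respect to ρ_2, and likewise for non-uniform generatability. -/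

import Mathlib

open Set

namespace Gen

variable {X : Type*}

/-- The support of a hypothesis `h : X → Bool`: its set of positive examples. -/
def supp (h : X → Bool) : Set X := {x | h x = true}

/-- Closed ball of radius `ε` around `c`, with respect to an explicit distance `ρ`. -/
def ball (ρ : X → X → ℝ) (c : X) (ε : ℝ) : Set X := {y | ρ c y ≤ ε}

/-- Closed `ε`-neighborhood of a set `A`: points whose infimal distance to `A` is `≤ ε`. -/
def setBall (ρ : X → X → ℝ) (A : Set X) (ε : ℝ) : Set X :=
  {y | sInf ((fun a => ρ a y) '' A) ≤ ε}

/-- The `ε`-covering number of `A` with respect to `ρ`, valued in `ℕ∞`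
(`⊤` if no finite cover exists). -/
noncomputable def covN (ρ : X → X → ℝ) (ε : ℝ) (A : Set X) : ℕ∞ :=
  sInf {n : ℕ∞ | ∃ S : Finset X, (S.card : ℕ∞) = n ∧ A ⊆ ⋃ θ ∈ S, ball ρ θ ε}

/-- `H` satisfies the `r`-Uniformly Unbounded Support property w.r.t. `ρ`. -/
def UUS (ρ : X → X → ℝ) (H : Set (X → Bool)) (r : ℝ) : Prop :=
  ∀ h ∈ H, covN ρ r (supp h) = ⊤

/-- The list of the first `s` terms `x 0, …, x (s-1)` of a sequence. -/
def prefList (x : ℕ → X) (s : ℕ) : List X := List.ofFn (fun i : Fin s => x i)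

/-- The set of the first `s` terms of a sequence. -/
def prefSet (x : ℕ → X) (s : ℕ) : Set X := x '' Iio s

/-- `(ε, ε')`-uniform generatability. -/
def UnifGen (ρ : X → X → ℝ) (ε ε' : ℝ) (H : Set (X → Bool)) : Prop :=
  ∃ G : List X → X, ∃ d : ℕ, ∀ h ∈ H, ∀ x : ℕ → X, (∀ i, x i ∈ supp h) →
    ∀ t : ℕ, (d : ℕ∞) ≤ covN ρ ε (prefSet x t) →
      ∀ s ≥ t, G (prefList x s) ∈ supp h \ setBall ρ (prefSet x s) ε'

/-- `(ε, ε')`-non-uniform generatability. -/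
def NonUnifGen (ρ : X → X → ℝ) (ε ε' : ℝ) (H : Set (X → Bool)) : Prop :=
  ∃ G : List X → X, ∀ h ∈ H, ∃ d : ℕ, ∀ x : ℕ → X, (∀ i, x i ∈ supp h) →
    ∀ t : ℕ, (d : ℕ∞) ≤ covN ρ ε (prefSet x t) →
      ∀ s ≥ t, G (prefList x s) ∈ supp h \ setBall ρ (prefSet x s) ε'

/-- `(ε, ε')`-generatability in the limit. -/
def GenInLimit (ρ : X → X → ℝ) (ε ε' : ℝ) (H : Set (X → Bool)) : Prop :=
  ∃ G : List X → X, ∀ h ∈ H, ∀ x : ℕ → X, (∀ i, x i ∈ supp h) →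
    supp h ⊆ setBall ρ (range x) ε →
      ∃ t : ℕ, ∀ s ≥ t, G (prefList x s) ∈ supp h \ setBall ρ (prefSet x s) ε'

/-- The closure `⟨x_1,…,x_t⟩_H` of a finite sample: intersection of the supports of all
hypotheses in the version space. -/
def clos (H : Set (X → Bool)) (l : List X) : Set X :=
  ⋂ h ∈ {h | h ∈ H ∧ ∀ y ∈ l, y ∈ supp h}, supp h

/-- The `(ε, ε')`-closure dimension of `H`, valued in `ℕ∞`. -/
noncomputable def closureDim (ρ : X → X → ℝ) (ε ε' : ℝ) (H : Set (X → Bool)) : ℕ∞ :=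
  sSup (insert 0 {d : ℕ∞ | ∃ h ∈ H, ∃ l : List X, (∀ y ∈ l, y ∈ supp h) ∧
    covN ρ ε {y | y ∈ l} = d ∧ covN ρ ε' (clos H l) ≠ ⊤})

/-- `ρ` is a metric on `X`. -/
def IsMetricDist (ρ : X → X → ℝ) : Prop :=
  (∀ x y, ρ x y = 0 ↔ x = y) ∧ (∀ x y, ρ x y = ρ y x) ∧
    ∀ x y z, ρ x z ≤ ρ x y + ρ y z

/-- `(X, ρ)` is doubling: every closed ball of radius `r` can be covered by at most `M`
closed balls of radius `r / 2`. -/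
def Doubling (ρ : X → X → ℝ) : Prop :=
  ∃ M : ℕ, ∀ (x : X) (r : ℝ), 0 < r →
    ∃ S : Finset X, S.card ≤ M ∧ ball ρ x r ⊆ ⋃ θ ∈ S, ball ρ θ (r / 2)


-- ### basic metric facts

lemma IsMetricDist.nonneg {ρ : X → X → ℝ} (hρ : IsMetricDist ρ) (x y : X) : 0 ≤ ρ x y := by
  have h1 : ρ x x = 0 := (hρ.1 x x).mpr rfl
  have h2 := hρ.2.2 x y x
  have h3 := hρ.2.1 y x
  linarith

-- ### covN basics

lemma covN_le_card (ρ : X → X → ℝ) (a : ℝ) {A : Set X} {S : Finset X}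
    (h : A ⊆ ⋃ θ ∈ S, ball ρ θ a) : covN ρ a A ≤ S.card :=
  sInf_le ⟨S, rfl, h⟩

lemma covN_mono_set (ρ : X → X → ℝ) (a : ℝ) {A B : Set X} (h : A ⊆ B) :
    covN ρ a A ≤ covN ρ a B := by
  apply le_sInf
  rintro n ⟨S, rfl, hS⟩
  exact sInf_le ⟨S, rfl, h.trans hS⟩

lemma covN_anti {ρ ρ' : X → X → ℝ} {a b : ℝ} (h : ∀ θ : X, ball ρ θ a ⊆ ball ρ' θ b)
    (A : Set X) : covN ρ' b A ≤ covN ρ a A := by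
  apply le_sInf
  rintro n ⟨S, rfl, hS⟩
  exact sInf_le ⟨S, rfl, hS.trans (Set.iUnion₂_mono fun θ _ => h θ)⟩

lemma covN_mono_rad (ρ : X → X → ℝ) {a b : ℝ} (hab : a ≤ b) (A : Set X) :
    covN ρ b A ≤ covN ρ a A :=
  covN_anti (fun _ _ hy => le_trans hy hab) A

lemma covN_empty (ρ : X → X → ℝ) (a : ℝ) : covN ρ a (∅ : Set X) = 0 := by
  apply le_antisymm _ zero_le
  simpa using covN_le_card ρ a (S := (∅ : Finset X)) (by simp)

lemma covN_eq_top_iff (ρ : X → X → ℝ) (a : ℝ) (A : Set X) :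
    covN ρ a A = ⊤ ↔ ∀ S : Finset X, ¬ A ⊆ ⋃ θ ∈ S, ball ρ θ a := by
  rw [covN, sInf_eq_top]
  constructor
  · intro h S hS
    exact WithTop.natCast_ne_top S.card (h _ ⟨S, rfl, hS⟩)
  · rintro h n ⟨S, rfl, hS⟩
    exact absurd hS (h S)

lemma exists_cover {ρ : X → X → ℝ} {a : ℝ} {A : Set X} (h : covN ρ a A ≠ ⊤) :
    ∃ S : Finset X, (S.card : ℕ∞) = covN ρ a A ∧ A ⊆ ⋃ θ ∈ S, ball ρ θ a := by
  have hne : {n : ℕ∞ | ∃ S : Finset X, (S.card : ℕ∞) = n ∧ A ⊆ ⋃ θ ∈ S, ball ρ θ a}.Nonempty := by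
    by_contra hc
    rw [Set.not_nonempty_iff_eq_empty] at hc
    rw [covN, hc, sInf_empty] at h
    exact h rfl
  obtain ⟨S, hS, hcov⟩ := csInf_mem hne
  exact ⟨S, hS, hcov⟩

lemma covN_transport {ρ ρ' : X → X → ℝ} {a b : ℝ} {K : ℕ} (hK : 1 ≤ K)
    (h : ∀ θ : X, ∃ T : Finset X, T.card ≤ K ∧ ball ρ θ a ⊆ ⋃ η ∈ T, ball ρ' η b)
    (A : Set X) : covN ρ' b A ≤ (K : ℕ∞) * covN ρ a A := by
  rcases eq_or_ne (covN ρ a A) ⊤ with ht | ht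
  · rw [ht, ENat.mul_top (by exact_mod_cast Nat.one_le_iff_ne_zero.mp hK)]
    exact le_top
  classical
  obtain ⟨S, hcard, hcov⟩ := exists_cover ht
  choose T hTcard hTcov using h
  refine le_trans (covN_le_card ρ' b (S := S.biUnion T) ?_) ?_
  · intro y hy
    obtain ⟨θ, hθS, hθ⟩ : ∃ θ ∈ S, y ∈ ball ρ θ a := by simpa using hcov hy
    obtain ⟨η, hη, hmem⟩ : ∃ η ∈ T θ, y ∈ ball ρ' η b := by simpa using hTcov θ hθ
    simp only [Set.mem_iUnion]
    exact ⟨η, Finset.mem_biUnion.mpr ⟨θ, hθS, hη⟩, hmem⟩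
  · calc ((S.biUnion T).card : ℕ∞) ≤ ((∑ θ ∈ S, (T θ).card : ℕ) : ℕ∞) := by
          exact_mod_cast Finset.card_biUnion_le
      _ ≤ ((S.card * K : ℕ) : ℕ∞) := by
          exact_mod_cast Finset.sum_le_card_nsmul S _ K (fun θ _ => hTcard θ)
      _ = (K : ℕ∞) * covN ρ a A := by rw [← hcard]; push_cast; ring


lemma covN_doubling_pow {ρ : X → X → ℝ} {M : ℕ} (hM : 1 ≤ M)
    (hdbl : ∀ (x : X) (r : ℝ), 0 < r →
      ∃ S : Finset X, S.card ≤ M ∧ ball ρ x r ⊆ ⋃ θ ∈ S, ball ρ θ (r / 2))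
    {b : ℝ} (hb : 0 < b) (k : ℕ) (A : Set X) :
    covN ρ (b / 2 ^ k) A ≤ ((M ^ k : ℕ) : ℕ∞) * covN ρ b A := by
  induction k with
  | zero => simpa using le_rfl
  | succ k ih =>
    have h2 : covN ρ (b / 2 ^ (k + 1)) A ≤ (M : ℕ∞) * covN ρ (b / 2 ^ k) A := by
      refine covN_transport hM (fun θ => ?_) A
      obtain ⟨S, hS, hcov⟩ := hdbl θ (b / 2 ^ k) (by positivity)
      refine ⟨S, hS, ?_⟩
      have : b / 2 ^ k / 2 = b / 2 ^ (k + 1) := by ring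
      rwa [this] at hcov
    calc covN ρ (b / 2 ^ (k + 1)) A ≤ (M : ℕ∞) * covN ρ (b / 2 ^ k) A := h2
      _ ≤ (M : ℕ∞) * (((M ^ k : ℕ) : ℕ∞) * covN ρ b A) := mul_le_mul_right ih _
      _ = ((M ^ (k + 1) : ℕ) : ℕ∞) * covN ρ b A := by push_cast; ring

lemma covN_master {ρ : X → X → ℝ} (hdbl : Doubling ρ) {a b : ℝ} (ha : 0 < a) (hb : 0 < b) :
    ∃ K : ℕ, 1 ≤ K ∧ ∀ A : Set X, covN ρ a A ≤ (K : ℕ∞) * covN ρ b A := by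
  obtain ⟨M, hM⟩ := hdbl
  have hM' : ∀ (x : X) (r : ℝ), 0 < r →
      ∃ S : Finset X, S.card ≤ max M 1 ∧ ball ρ x r ⊆ ⋃ θ ∈ S, ball ρ θ (r / 2) := by
    intro x r hr
    obtain ⟨S, h1, h2⟩ := hM x r hr
    exact ⟨S, h1.trans (le_max_left _ _), h2⟩
  obtain ⟨k, hk⟩ : ∃ k : ℕ, b / 2 ^ k ≤ a := by
    obtain ⟨k, hk⟩ := pow_unbounded_of_one_lt (b / a) one_lt_two
    refine ⟨k, ?_⟩
    rw [div_le_iff₀ (by positivity)]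
    nlinarith [(div_lt_iff₀ ha).mp hk]
  refine ⟨(max M 1) ^ k, Nat.one_le_pow _ _ (by omega), fun A => ?_⟩
  exact (covN_mono_rad ρ hk A).trans (covN_doubling_pow (le_max_right _ _) hM' hb k A)

lemma covN_eq_top_of_separated {ρ : X → X → ℝ} (hρ : IsMetricDist ρ) {A : Set X} {r : ℝ}
    (f : ℕ → X) (hfA : ∀ n, f n ∈ A) (hsep : ∀ m n : ℕ, m < n → r < ρ (f m) (f n)) :
    covN ρ (r / 2) A = ⊤ := by
  rw [covN_eq_top_iff]
  intro S hS
  have hmap : ∀ n : Fin (S.card + 1), ∃ θ ∈ S, ρ θ (f n) ≤ r / 2 := by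
    intro n
    have := hS (hfA n)
    simpa [ball] using this
  choose g hgS hg using hmap
  obtain ⟨m, -, n, -, hmn, heq⟩ := Finset.exists_ne_map_eq_of_card_lt_of_maps_to
    (s := (Finset.univ : Finset (Fin (S.card + 1)))) (t := S) (by simp) (fun n _ => hgS n)
  have key : ∀ m n : Fin (S.card + 1), (m : ℕ) < (n : ℕ) → g m = g n → False := by
    intro m n hlt he
    have h1 := hg m
    have h2 := hg n
    have h3 := hsep m n hlt
    have htri := hρ.2.2 (f m) (g n) (f n)
    have hsym := hρ.2.1 (f m) (g n)
    rw [he] at h1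
    linarith
  rcases lt_or_gt_of_ne (fun h : (m : ℕ) = (n : ℕ) => hmn (Fin.ext h)) with h | h
  · exact key m n h heq
  · exact key n m h heq.symm

lemma covN_le_length {ρ : X → X → ℝ} (hρ : IsMetricDist ρ) {a : ℝ} (ha : 0 ≤ a) (l : List X) :
    covN ρ a {y | y ∈ l} ≤ (l.length : ℕ∞) := by
  classical
  refine le_trans (covN_le_card ρ a (S := l.toFinset) ?_) ?_
  · intro y hy
    simp only [Set.mem_iUnion]
    exact ⟨y, by simpa using hy, by simp [ball, (hρ.1 y y).mpr rfl, ha]⟩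
  · exact_mod_cast l.toFinset_card_le

-- ### setBall

lemma setBall_list_subset [DecidableEq X] {ρ : X → X → ℝ} {l : List X} (hl : l ≠ []) (b : ℝ) :
    setBall ρ {y | y ∈ l} b ⊆ ⋃ θ ∈ l.toFinset, ball ρ θ b := by
  classical
  intro y hy
  have hne : ((fun a => ρ a y) '' {z | z ∈ l}).Nonempty := by
    obtain ⟨z, hz⟩ := List.exists_mem_of_ne_nil l hl
    exact ⟨ρ z y, ⟨z, hz, rfl⟩⟩
  have hfin : ((fun a => ρ a y) '' {z | z ∈ l}).Finite := by
    apply Set.Finite.image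
    exact l.finite_toSet
  obtain ⟨a, ha, hav⟩ := Set.Nonempty.csInf_mem hne hfin
  simp only [Set.mem_iUnion]
  exact ⟨a, by simpa using ha, hav.le.trans hy⟩

lemma lt_dist_of_not_mem_setBall {ρ : X → X → ℝ} (hρ : IsMetricDist ρ) {A : Set X} {b : ℝ}
    {p : X} (hp : p ∉ setBall ρ A b) {a : X} (ha : a ∈ A) : b < ρ a p := by
  by_contra h
  push_neg at h
  have hbdd : BddBelow ((fun z => ρ z p) '' A) := by
    refine ⟨0, ?_⟩
    rintro _ ⟨z, _, rfl⟩
    exact hρ.nonneg z p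
  have hmem : ρ a p ∈ ((fun z => ρ z p) '' A) := ⟨a, ha, rfl⟩
  exact hp (le_trans (csInf_le hbdd hmem) h)

lemma clos_subset_supp {H' : Set (X → Bool)} {l : List X} {h : X → Bool} (hh : h ∈ H')
    (hcons : ∀ y ∈ l, y ∈ supp h) : clos H' l ⊆ supp h :=
  Set.biInter_subset_of_mem ⟨hh, hcons⟩

lemma exists_clos_point {ρ : X → X → ℝ} {H' : Set (X → Bool)} {l : List X} (hl : l ≠ [])
    {b : ℝ} (htop : covN ρ b (clos H' l) = ⊤) :
    ∃ p, p ∈ clos H' l ∧ p ∉ setBall ρ {y | y ∈ l} b := by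
  classical
  by_contra hc
  push_neg at hc
  have hsub : clos H' l ⊆ ⋃ θ ∈ l.toFinset, ball ρ θ b :=
    fun p hp => setBall_list_subset hl b (hc p hp)
  have hle := covN_le_card ρ b hsub
  rw [htop, top_le_iff] at hle
  exact WithTop.natCast_ne_top (l.toFinset.card) hle

-- ### prefList / prefSet

lemma mem_prefList (x : ℕ → X) (s : ℕ) : {y | y ∈ prefList x s} = prefSet x s := by
  ext y
  simp only [prefList, Set.mem_setOf_eq, List.mem_ofFn, Set.mem_range, prefSet,
    Set.mem_image, Set.mem_Iio]
  constructor
  · rintro ⟨i, rfl⟩; exact ⟨i, i.2, rfl⟩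
  · rintro ⟨i, hi, rfl⟩; exact ⟨⟨i, hi⟩, rfl⟩

lemma prefList_length (x : ℕ → X) (s : ℕ) : (prefList x s).length = s := by
  simp [prefList]

lemma prefSet_mono (x : ℕ → X) {t s : ℕ} (h : t ≤ s) : prefSet x t ⊆ prefSet x s :=
  Set.image_mono (Set.Iio_subset_Iio h)

lemma prefList_congr {x y : ℕ → X} {s : ℕ} (h : ∀ i < s, x i = y i) :
    prefList x s = prefList y s := by
  unfold prefList
  congr 1
  funext i
  exact h i i.2

lemma prefSet_congr {x y : ℕ → X} {s : ℕ} (h : ∀ i < s, x i = y i) :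
    prefSet x s = prefSet y s := by
  rw [← mem_prefList, ← mem_prefList, prefList_congr h]

lemma prefList_succ (x : ℕ → X) (s : ℕ) : prefList x (s + 1) = prefList x s ++ [x s] := by
  rw [prefList, List.ofFn_succ']
  simp only [List.concat_eq_append, Fin.coe_castSucc, Fin.val_last]
  rfl


-- ### the adversarial sequence

noncomputable def stepFn (G : List X → X) (l : List X) (cur : List X) : X :=
  if cur.length < l.length then l.getD cur.length (G cur) else G cur

noncomputable def buildL (G : List X → X) (l : List X) : ℕ → List X
  | 0 => []
  | n + 1 => buildL G l n ++ [stepFn G l (buildL G l n)]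

noncomputable def buildSeq (G : List X → X) (l : List X) (i : ℕ) : X :=
  stepFn G l (buildL G l i)

lemma buildL_length (G : List X → X) (l : List X) (n : ℕ) : (buildL G l n).length = n := by
  induction n with
  | zero => rfl
  | succ n ih => simp [buildL, ih]

lemma prefList_buildSeq (G : List X → X) (l : List X) (n : ℕ) :
    prefList (buildSeq G l) n = buildL G l n := by
  induction n with
  | zero => rfl
  | succ n ih => rw [prefList_succ, ih]; rfl

lemma buildSeq_lt (G : List X → X) (l : List X) {i : ℕ} (h : i < l.length) :
    buildSeq G l i ∈ l := by
  unfold buildSeq stepFn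
  rw [buildL_length, if_pos h, List.getD_eq_getElem l _ h]
  exact List.getElem_mem h

lemma buildSeq_ge (G : List X → X) (l : List X) {i : ℕ} (h : l.length ≤ i) :
    buildSeq G l i = G (prefList (buildSeq G l) i) := by
  rw [prefList_buildSeq]
  unfold buildSeq stepFn
  rw [buildL_length, if_neg (by omega)]

-- ### from a uniform generator to infinite closures (Claim 2)

lemma Q_of_unifBody {ρ : X → X → ℝ} (hρ : IsMetricDist ρ) {H' : Set (X → Bool)} {ε ε' : ℝ}
    (G : List X → X) (d : ℕ)
    (hG : ∀ h ∈ H', ∀ x : ℕ → X, (∀ i, x i ∈ supp h) →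
      ∀ t : ℕ, (d : ℕ∞) ≤ covN ρ ε (prefSet x t) →
      ∀ s ≥ t, G (prefList x s) ∈ supp h \ setBall ρ (prefSet x s) ε') :
    ∀ h₀ ∈ H', ∀ l : List X, (∀ y ∈ l, y ∈ supp h₀) →
      ((max d 1 : ℕ) : ℕ∞) ≤ covN ρ ε {y | y ∈ l} → covN ρ (ε' / 2) (clos H' l) = ⊤ := by
  intro h₀ hh₀ l hl hcov
  have hlne : l ≠ [] := by
    rintro rfl
    rw [show {y | y ∈ ([] : List X)} = (∅ : Set X) by simp, covN_empty] at hcov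
    simp only [nonpos_iff_eq_zero, Nat.cast_eq_zero] at hcov
    omega
  set t := l.length with ht
  have htpos : 0 < t := List.length_pos_iff.mpr hlne
  set x := buildSeq G l with hxdef
  have hpref_t : prefSet x t = {y | y ∈ l} := by
    ext y
    constructor
    · rintro ⟨i, hi, rfl⟩
      exact buildSeq_lt G l hi
    · intro hy
      obtain ⟨⟨i, hi⟩, hget⟩ := List.mem_iff_get.mp hy
      refine ⟨i, hi, ?_⟩
      have hx1 : buildSeq G l i = l[i] := by
        unfold buildSeq stepFn
        rw [buildL_length, if_pos hi, List.getD_eq_getElem l _ hi]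
      rw [hxdef, hx1, ← hget, List.get_eq_getElem]
  have hdle : (d : ℕ∞) ≤ covN ρ ε {y | y ∈ l} :=
    le_trans (by exact_mod_cast Nat.le_max_left d 1) hcov
  have hconsMem : ∀ i, ∀ h ∈ H', (∀ y ∈ l, y ∈ supp h) → x i ∈ supp h := by
    intro i
    induction i using Nat.strong_induction_on with
    | _ i ih =>
      intro h hh hcons
      by_cases hi : i < t
      · exact hcons _ (buildSeq_lt G l hi)
      · push_neg at hi
        set y : ℕ → X := fun j => if j < i then x j else x 0 with hy
        have h0i : 0 < i := lt_of_lt_of_le htpos hi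
        have hy_supp : ∀ j, y j ∈ supp h := by
          intro j
          by_cases hj : j < i
          · simpa [hy, hj] using ih j hj h hh hcons
          · simpa [hy, hj] using ih 0 h0i h hh hcons
        have hys : prefSet y t = prefSet x t :=
          prefSet_congr fun j hj => if_pos (lt_of_lt_of_le hj hi)
        have htrig : (d : ℕ∞) ≤ covN ρ ε (prefSet y t) := by
          rw [hys, hpref_t]; exact hdle
        have hout := hG h hh y hy_supp t htrig i hi
        have hpl : prefList y i = prefList x i :=
          prefList_congr (fun j hj => if_pos hj)
        rw [hpl] at hout
        have hxi : x i = G (prefList x i) := buildSeq_ge G l hi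
        rw [hxi]
        exact hout.1
  have hx_supp : ∀ i, x i ∈ supp h₀ := fun i => hconsMem i h₀ hh₀ hl
  have htrig : (d : ℕ∞) ≤ covN ρ ε (prefSet x t) := by rw [hpref_t]; exact hdle
  have hsep : ∀ i j : ℕ, t ≤ j → i < j → ε' < ρ (x i) (x j) := by
    intro i j htj hij
    have hout := hG h₀ hh₀ x hx_supp t htrig j htj
    have hxj : x j = G (prefList x j) := buildSeq_ge G l htj
    rw [← hxj] at hout
    exact lt_dist_of_not_mem_setBall hρ hout.2 ⟨i, hij, rfl⟩
  refine covN_eq_top_of_separated hρ (fun n => x (t + n)) (fun n => ?_) (fun m n hmn => ?_)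
  · exact Set.mem_iInter₂.mpr fun h' hh' => hconsMem (t + n) h' hh'.1 hh'.2
  · exact hsep (t + m) (t + n) (Nat.le_add_right _ _) (by omega)


-- ### from infinite closures back to a generator (Claim 1)

lemma prefList_ne_nil_of_covN {ρ : X → X → ℝ} {α : ℝ} {x : ℕ → X} {t s : ℕ} {d : ℕ}
    (hd : 1 ≤ d) (hcov : (d : ℕ∞) ≤ covN ρ α (prefSet x t)) (hst : t ≤ s) :
    prefList x s ≠ [] := by
  intro hnil
  have hs0 : s = 0 := by
    have := prefList_length x s
    rw [hnil] at this
    simpa using this.symm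
  subst hs0
  have ht0 : t = 0 := Nat.le_zero.mp hst
  subst ht0
  rw [show prefSet x 0 = (∅ : Set X) by ext n; simp [prefSet], covN_empty] at hcov
  simp only [nonpos_iff_eq_zero, Nat.cast_eq_zero] at hcov
  omega

lemma unifGen_of_Q {ρ : X → X → ℝ} [Nonempty X] {H' : Set (X → Bool)} {α β : ℝ} {d : ℕ}
    (hd : 1 ≤ d)
    (hQ : ∀ h ∈ H', ∀ l : List X, (∀ y ∈ l, y ∈ supp h) →
      (d : ℕ∞) ≤ covN ρ α {y | y ∈ l} → covN ρ β (clos H' l) = ⊤) :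
    UnifGen ρ α β H' := by
  classical
  refine ⟨fun lst =>
    if hx : ∃ p, p ∈ clos H' lst ∧ p ∉ setBall ρ {y | y ∈ lst} β then hx.choose
    else Classical.arbitrary X, d, ?_⟩
  intro h hh x hx t hcov s hst
  have hcons : ∀ y ∈ prefList x s, y ∈ supp h := by
    intro y hy
    have : y ∈ prefSet x s := by rw [← mem_prefList]; exact hy
    obtain ⟨i, -, rfl⟩ := this
    exact hx i
  have hcovs : (d : ℕ∞) ≤ covN ρ α {y | y ∈ prefList x s} := by
    rw [mem_prefList]
    exact le_trans hcov (covN_mono_set _ _ (prefSet_mono x hst))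
  have htop := hQ h hh (prefList x s) hcons hcovs
  have hlne : prefList x s ≠ [] := prefList_ne_nil_of_covN hd hcov hst
  have hex : ∃ p, p ∈ clos H' (prefList x s) ∧ p ∉ setBall ρ {y | y ∈ prefList x s} β :=
    exists_clos_point hlne htop
  have hGeq : (if hx : ∃ p, p ∈ clos H' (prefList x s) ∧ p ∉ setBall ρ {y | y ∈ prefList x s} β
      then hx.choose else Classical.arbitrary X) = hex.choose := dif_pos hex
  show (if hx : ∃ p, p ∈ clos H' (prefList x s) ∧ p ∉ setBall ρ {y | y ∈ prefList x s} β
      then hx.choose else Classical.arbitrary X) ∈ _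
  rw [hGeq]
  obtain ⟨hp1, hp2⟩ := hex.choose_spec
  constructor
  · exact clos_subset_supp hh hcons hp1
  · have hsb : setBall ρ {y | y ∈ prefList x s} β = setBall ρ (prefSet x s) β := by
      rw [mem_prefList]
    rw [← hsb]
    exact hp2

-- ### scale/metric transport of the closure property

lemma le_covN_cancel {K d : ℕ} (hK : 1 ≤ K) {u v : ℕ∞} (h1 : u ≤ (K : ℕ∞) * v)
    (h2 : ((K * d : ℕ) : ℕ∞) ≤ u) : (d : ℕ∞) ≤ v := by
  rcases eq_or_ne v ⊤ with he | he
  · simp [he]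
  obtain ⟨n, hn⟩ := WithTop.ne_top_iff_exists.mp he
  have h3 : ((K * d : ℕ) : ℕ∞) ≤ ((K * n : ℕ) : ℕ∞) := by
    refine le_trans (h2.trans h1) ?_
    rw [← hn]
    push_cast
    exact le_rfl
  have h4 : K * d ≤ K * n := by exact_mod_cast h3
  have h5 : d ≤ n := Nat.le_of_mul_le_mul_left h4 (by omega)
  rw [← hn]
  exact Nat.cast_le.mpr h5

lemma top_of_le_mul {K : ℕ} {u v : ℕ∞} (h : u ≤ (K : ℕ∞) * v) (hu : u = ⊤) : v = ⊤ := by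
  by_contra hv
  obtain ⟨n, hn⟩ := WithTop.ne_top_iff_exists.mp hv
  rw [hu, top_le_iff, ← hn] at h
  have : ((K * n : ℕ) : ℕ∞) = ⊤ := by push_cast; exact h
  exact WithTop.natCast_ne_top _ this

lemma Q_transport {ρ ρ' : X → X → ℝ} {H' : Set (X → Bool)} {α β α' β' : ℝ} {d K₁ K₂ : ℕ}
    (hK₁ : 1 ≤ K₁)
    (h1 : ∀ A : Set X, covN ρ' α' A ≤ (K₁ : ℕ∞) * covN ρ α A)
    (h2 : ∀ A : Set X, covN ρ β A ≤ (K₂ : ℕ∞) * covN ρ' β' A)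
    (hQ : ∀ h ∈ H', ∀ l : List X, (∀ y ∈ l, y ∈ supp h) →
      (d : ℕ∞) ≤ covN ρ α {y | y ∈ l} → covN ρ β (clos H' l) = ⊤) :
    ∀ h ∈ H', ∀ l : List X, (∀ y ∈ l, y ∈ supp h) →
      ((K₁ * d : ℕ) : ℕ∞) ≤ covN ρ' α' {y | y ∈ l} → covN ρ' β' (clos H' l) = ⊤ := by
  intro h hh l hcons hcov
  exact top_of_le_mul (h2 (clos H' l))
    (hQ h hh l hcons (le_covN_cancel hK₁ (h1 {y | y ∈ l}) hcov))


-- ### the non-uniform generator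

lemma nonUnifGen_of_Q {ρ' : X → X → ℝ} (hρ' : IsMetricDist ρ') [Nonempty X]
    {H' : Set (X → Bool)} {α' β' : ℝ} (hα' : 0 ≤ α') (D : (X → Bool) → ℕ) {K : ℕ} (hK : 1 ≤ K)
    (hQ : ∀ m : ℕ, ∀ h ∈ {h | h ∈ H' ∧ D h ≤ m}, ∀ l : List X, (∀ y ∈ l, y ∈ supp h) →
      ((K * max m 1 : ℕ) : ℕ∞) ≤ covN ρ' α' {y | y ∈ l} →
      covN ρ' β' (clos {h | h ∈ H' ∧ D h ≤ m} l) = ⊤) :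
    NonUnifGen ρ' α' β' H' := by
  classical
  set P : List X → ℕ → Prop := fun lst m => ((K * max m 1 : ℕ) : ℕ∞) ≤ covN ρ' α' {y | y ∈ lst}
    with hP
  set mIdx : List X → ℕ := fun lst => Nat.findGreatest (P lst) lst.length with hmIdx
  refine ⟨fun lst =>
    if hx : ∃ p, p ∈ clos {h | h ∈ H' ∧ D h ≤ mIdx lst} lst ∧ p ∉ setBall ρ' {y | y ∈ lst} β'
    then hx.choose else Classical.arbitrary X, ?_⟩
  intro h hh
  refine ⟨K * max (D h) 1, ?_⟩
  intro x hx t hcov s hst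
  have hsetEq : {y | y ∈ prefList x s} = prefSet x s := mem_prefList x s
  have hcons : ∀ y ∈ prefList x s, y ∈ supp h := by
    intro y hy
    have : y ∈ prefSet x s := by rw [← mem_prefList]; exact hy
    obtain ⟨i, -, rfl⟩ := this
    exact hx i
  have hcovs : ((K * max (D h) 1 : ℕ) : ℕ∞) ≤ covN ρ' α' {y | y ∈ prefList x s} := by
    rw [hsetEq]
    exact le_trans hcov (covN_mono_set _ _ (prefSet_mono x hst))
  have hPdh : P (prefList x s) (D h) := hcovs
  have hDle : D h ≤ (prefList x s).length := by
    have hcov_le : covN ρ' α' {y | y ∈ prefList x s} ≤ ((prefList x s).length : ℕ∞) :=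
      covN_le_length hρ' hα' (prefList x s)
    have h1 : ((D h : ℕ) : ℕ∞) ≤ ((K * max (D h) 1 : ℕ) : ℕ∞) := by
      refine Nat.cast_le.mpr ?_
      calc D h ≤ max (D h) 1 := le_max_left _ _
        _ = 1 * max (D h) 1 := (one_mul _).symm
        _ ≤ K * max (D h) 1 := Nat.mul_le_mul_right _ hK
    exact_mod_cast le_trans (le_trans h1 hcovs) hcov_le
  have hm_ge : D h ≤ mIdx (prefList x s) := Nat.le_findGreatest hDle hPdh
  have hPm : P (prefList x s) (mIdx (prefList x s)) := Nat.findGreatest_spec hDle hPdh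
  have htop := hQ (mIdx (prefList x s)) h ⟨hh, hm_ge⟩ (prefList x s) hcons hPm
  have hlne : prefList x s ≠ [] := by
    refine prefList_ne_nil_of_covN (d := K * max (D h) 1) ?_ hcov hst
    have : 1 ≤ max (D h) 1 := le_max_right _ _
    exact Nat.one_le_iff_ne_zero.mpr (by positivity)
  have hex : ∃ p, p ∈ clos {h | h ∈ H' ∧ D h ≤ mIdx (prefList x s)} (prefList x s) ∧
      p ∉ setBall ρ' {y | y ∈ prefList x s} β' := exists_clos_point hlne htop
  have hGeq : (if hx : ∃ p, p ∈ clos {h | h ∈ H' ∧ D h ≤ mIdx (prefList x s)} (prefList x s) ∧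
        p ∉ setBall ρ' {y | y ∈ prefList x s} β'
      then hx.choose else Classical.arbitrary X) = hex.choose := dif_pos hex
  show (if hx : ∃ p, p ∈ clos {h | h ∈ H' ∧ D h ≤ mIdx (prefList x s)} (prefList x s) ∧
        p ∉ setBall ρ' {y | y ∈ prefList x s} β'
      then hx.choose else Classical.arbitrary X) ∈ _
  rw [hGeq]
  obtain ⟨hp1, hp2⟩ := hex.choose_spec
  constructor
  · exact clos_subset_supp (show h ∈ {h | h ∈ H' ∧ D h ≤ mIdx (prefList x s)} from ⟨hh, hm_ge⟩)
      hcons hp1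
  · have hsb : setBall ρ' {y | y ∈ prefList x s} β' = setBall ρ' (prefSet x s) β' := by
      rw [mem_prefList]
    rw [← hsb]
    exact hp2


-- ### comparison of covering numbers for strongly equivalent metrics

section Cross

variable {ρ₁ ρ₂ : X → X → ℝ} {c C : ℝ}

lemma cross21 (hc : 0 < c) (hC : 0 < C)
    (hequiv : ∀ x y, c * ρ₁ x y ≤ ρ₂ x y ∧ ρ₂ x y ≤ C * ρ₁ x y)
    (hdbl : Doubling ρ₁) {a b : ℝ} (ha : 0 < a) (hb : 0 < b) :
    ∃ K : ℕ, 1 ≤ K ∧ ∀ A : Set X, covN ρ₂ a A ≤ (K : ℕ∞) * covN ρ₁ b A := by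
  obtain ⟨K, hK, hKA⟩ := covN_master hdbl (a := a / C) (b := b) (by positivity) hb
  refine ⟨K, hK, fun A => le_trans ?_ (hKA A)⟩
  refine covN_anti (fun θ y hy => ?_) A
  have h2 := (hequiv θ y).2
  have : ρ₁ θ y ≤ a / C := hy
  calc ρ₂ θ y ≤ C * ρ₁ θ y := h2
    _ ≤ C * (a / C) := by nlinarith
    _ = a := by field_simp

lemma cross12 (hc : 0 < c) (hC : 0 < C)
    (hequiv : ∀ x y, c * ρ₁ x y ≤ ρ₂ x y ∧ ρ₂ x y ≤ C * ρ₁ x y)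
    (hdbl : Doubling ρ₁) {a b : ℝ} (ha : 0 < a) (hb : 0 < b) :
    ∃ K : ℕ, 1 ≤ K ∧ ∀ A : Set X, covN ρ₁ a A ≤ (K : ℕ∞) * covN ρ₂ b A := by
  obtain ⟨K, hK, hKA⟩ := covN_master hdbl (a := a) (b := b / c) ha (by positivity)
  refine ⟨K, hK, fun A => le_trans (hKA A) (mul_le_mul_right ?_ _)⟩
  refine covN_anti (fun θ y hy => ?_) A
  have h1 := (hequiv θ y).1
  have : ρ₂ θ y ≤ b := hy
  show ρ₁ θ y ≤ b / c
  rw [le_div_iff₀ hc]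
  nlinarith

end Cross

-- ### transfer of generatability

lemma unifGen_transfer {ρ ρ' : X → X → ℝ} (hρ : IsMetricDist ρ) [Nonempty X]
    {H' : Set (X → Bool)} {ε ε' δ δ' : ℝ} {K₁ K₂ : ℕ} (hK₁ : 1 ≤ K₁)
    (h1 : ∀ A : Set X, covN ρ' δ A ≤ (K₁ : ℕ∞) * covN ρ ε A)
    (h2 : ∀ A : Set X, covN ρ (ε' / 2) A ≤ (K₂ : ℕ∞) * covN ρ' δ' A)
    (hU : UnifGen ρ ε ε' H') : UnifGen ρ' δ δ' H' := by
  obtain ⟨G, d, hG⟩ := hU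
  have hQ := Q_of_unifBody hρ G d hG
  have hQ' := Q_transport hK₁ h1 h2 hQ
  refine unifGen_of_Q (d := K₁ * max d 1) ?_ hQ'
  have : 0 < K₁ * max d 1 := Nat.mul_pos (by omega) (by omega)
  omega

lemma nonUnifGen_transfer {ρ ρ' : X → X → ℝ} (hρ : IsMetricDist ρ) (hρ' : IsMetricDist ρ')
    [Nonempty X] {H' : Set (X → Bool)} {ε ε' δ δ' : ℝ} (hδ : 0 ≤ δ) {K₁ K₂ : ℕ} (hK₁ : 1 ≤ K₁)
    (h1 : ∀ A : Set X, covN ρ' δ A ≤ (K₁ : ℕ∞) * covN ρ ε A)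
    (h2 : ∀ A : Set X, covN ρ (ε' / 2) A ≤ (K₂ : ℕ∞) * covN ρ' δ' A)
    (hN : NonUnifGen ρ ε ε' H') : NonUnifGen ρ' δ δ' H' := by
  classical
  obtain ⟨G, hG⟩ := hN
  choose! Dfun hD using hG
  refine nonUnifGen_of_Q hρ' hδ Dfun hK₁ (fun m => ?_)
  have hbody : ∀ h ∈ {h | h ∈ H' ∧ Dfun h ≤ m}, ∀ x : ℕ → X, (∀ i, x i ∈ supp h) →
      ∀ t : ℕ, ((m : ℕ) : ℕ∞) ≤ covN ρ ε (prefSet x t) →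
      ∀ s ≥ t, G (prefList x s) ∈ supp h \ setBall ρ (prefSet x s) ε' := by
    intro h hh x hx t hcov s hst
    exact hD h hh.1 x hx t (le_trans (Nat.cast_le.mpr hh.2) hcov) s hst
  have hQ := Q_of_unifBody hρ G m hbody
  exact Q_transport hK₁ h1 h2 hQ



/-- in a doubling space, the UUS property and generatability are invariant
under strongly equivalent metrics. -/
theorem gen_invariant_of_equiv_metrics {X : Type*} (ρ₁ ρ₂ : X → X → ℝ)
    (hρ₁ : IsMetricDist ρ₁) (hρ₂ : IsMetricDist ρ₂)
    (c C : ℝ) (hc : 0 < c) (hC : 0 < C)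
    (hequiv : ∀ x y, c * ρ₁ x y ≤ ρ₂ x y ∧ ρ₂ x y ≤ C * ρ₁ x y)
    (hdbl : Doubling ρ₁) (H : Set (X → Bool)) :
    ((∃ r : ℝ, 0 < r ∧ UUS ρ₁ H r) ↔ (∃ r' : ℝ, 0 < r' ∧ UUS ρ₂ H r')) ∧
      (∀ ε ε' δ δ' : ℝ, 0 < ε → 0 < ε' → 0 < δ → 0 < δ' →
        (UnifGen ρ₁ ε ε' H ↔ UnifGen ρ₂ δ δ' H) ∧
          (NonUnifGen ρ₁ ε ε' H ↔ NonUnifGen ρ₂ δ δ' H)) := by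
  have c21 := fun {a b : ℝ} (ha : 0 < a) (hb : 0 < b) => cross21 hc hC hequiv hdbl ha hb
  have c12 := fun {a b : ℝ} (ha : 0 < a) (hb : 0 < b) => cross12 hc hC hequiv hdbl ha hb
  constructor
  · constructor
    · rintro ⟨r, hr, hU⟩
      obtain ⟨K, hK, hKA⟩ := c12 hr one_pos
      exact ⟨1, one_pos, fun h hh => top_of_le_mul (hKA (supp h)) (hU h hh)⟩
    · rintro ⟨r', hr', hU⟩
      obtain ⟨K, hK, hKA⟩ := c21 hr' one_pos
      exact ⟨1, one_pos, fun h hh => top_of_le_mul (hKA (supp h)) (hU h hh)⟩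
  · intro ε ε' δ δ' hε hε' hδ hδ'
    by_cases hX : Nonempty X
    · constructor
      · constructor
        · intro hU
          obtain ⟨K₁, hK₁, h1⟩ := c21 hδ hε
          obtain ⟨K₂, hK₂, h2⟩ := c12 (by positivity : (0:ℝ) < ε' / 2) hδ'
          exact unifGen_transfer hρ₁ hK₁ h1 h2 hU
        · intro hU
          obtain ⟨K₁, hK₁, h1⟩ := c12 hε hδ
          obtain ⟨K₂, hK₂, h2⟩ := c21 (by positivity : (0:ℝ) < δ' / 2) hε'
          exact unifGen_transfer hρ₂ hK₁ h1 h2 hU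
      · constructor
        · intro hN
          obtain ⟨K₁, hK₁, h1⟩ := c21 hδ hε
          obtain ⟨K₂, hK₂, h2⟩ := c12 (by positivity : (0:ℝ) < ε' / 2) hδ'
          exact nonUnifGen_transfer hρ₁ hρ₂ hδ.le hK₁ h1 h2 hN
        · intro hN
          obtain ⟨K₁, hK₁, h1⟩ := c12 hε hδ
          obtain ⟨K₂, hK₂, h2⟩ := c21 (by positivity : (0:ℝ) < δ' / 2) hε'
          exact nonUnifGen_transfer hρ₂ hρ₁ hε.le hK₁ h1 h2 hN
    · have hu : ∀ (σ : X → X → ℝ) (a b : ℝ), ¬ UnifGen σ a b H := by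
        rintro σ a b ⟨G, -⟩
        exact hX ⟨G []⟩
      have hn : ∀ (σ : X → X → ℝ) (a b : ℝ), ¬ NonUnifGen σ a b H := by
        rintro σ a b ⟨G, -⟩
        exact hX ⟨G []⟩
      exact ⟨iff_of_false (hu _ _ _) (hu _ _ _), iff_of_false (hn _ _ _) (hn _ _ _)⟩


end Gen
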